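/- For every real β > 0, every integer P ≥ 1, and every real r with 0 < r < 1, there exists a constant K > 0 such that for all x ∈ [0, r], |2(cos(β·√(x/(1−x))) − 1) − ∑_{p=1}^{P} A_p(β) x^p| ≤ K · x^{P+1}. -/

import Mathlib

open Finset in

noncomputable def cc (β : ℝ) (m : ℕ) : ℝ :=
  (-1 : ℝ) ^ m * β ^ (2 * m) / (Nat.factorial (2 * m))

lemma abs_cc (β : ℝ) (m : ℕ) :
    |cc β m| = β ^ (2 * m) / (Nat.factorial (2 * m)) := by
  have h1 : (0:ℝ) ≤ β ^ (2 * m) := by rw [pow_mul]; positivity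
  have h2 : (0:ℝ) < (Nat.factorial (2 * m) : ℝ) := by positivity
  rw [cc, abs_div, abs_mul, abs_pow, abs_neg, abs_one, one_pow, one_mul,
    abs_of_nonneg h1, abs_of_pos h2]

lemma hasSum_cos_sqrt (β : ℝ) {u : ℝ} (hu : 0 ≤ u) :
    HasSum (fun m : ℕ => cc β m * u ^ m) (Real.cos (β * Real.sqrt u)) := by
  have h := Real.hasSum_cos (β * Real.sqrt u)
  have he : ∀ m : ℕ, (-1:ℝ) ^ m * (β * Real.sqrt u) ^ (2 * m) / (Nat.factorial (2 * m))
      = cc β m * u ^ m := by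
    intro m
    have : (β * Real.sqrt u) ^ (2 * m) = β ^ (2 * m) * u ^ m := by
      rw [mul_pow, pow_mul (Real.sqrt u), Real.sq_sqrt hu]
    rw [this, cc]; ring
  simpa only [he] using h

lemma hasSum_cosh_sqrt (β : ℝ) {u : ℝ} (hu : 0 ≤ u) :
    HasSum (fun m : ℕ => β ^ (2 * m) / (Nat.factorial (2 * m)) * u ^ m)
      (Real.cosh (β * Real.sqrt u)) := by
  have h := Real.hasSum_cosh (β * Real.sqrt u)
  have he : ∀ m : ℕ, (β * Real.sqrt u) ^ (2 * m) / (Nat.factorial (2 * m))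
      = β ^ (2 * m) / (Nat.factorial (2 * m)) * u ^ m := by
    intro m
    have : (β * Real.sqrt u) ^ (2 * m) = β ^ (2 * m) * u ^ m := by
      rw [mul_pow, pow_mul (Real.sqrt u), Real.sq_sqrt hu]
    rw [this]; ring
  simpa only [he] using h

lemma tail_cos (β : ℝ) (P : ℕ) {u : ℝ} (hu : 0 ≤ u) :
    HasSum (fun i : ℕ => cc β (i + (P + 1)) * u ^ (i + (P + 1)))
      (Real.cos (β * Real.sqrt u) - ∑ m ∈ Finset.range (P + 1), cc β m * u ^ m) :=
  (hasSum_nat_add_iff' (P + 1)).mpr (hasSum_cos_sqrt β hu)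

lemma tail_cosh (β : ℝ) (P : ℕ) {u : ℝ} (hu : 0 ≤ u) :
    HasSum (fun i : ℕ => β ^ (2 * (i + (P + 1))) / (Nat.factorial (2 * (i + (P + 1)))) * u ^ (i + (P + 1)))
      (Real.cosh (β * Real.sqrt u)
        - ∑ m ∈ Finset.range (P + 1), β ^ (2 * m) / (Nat.factorial (2 * m)) * u ^ m) :=
  (hasSum_nat_add_iff' (P + 1)).mpr (hasSum_cosh_sqrt β hu)

lemma tail_binom (P m : ℕ) (hm1 : 1 ≤ m) (hmP : m ≤ P) {x : ℝ} (hx0 : 0 ≤ x) (hx1 : x < 1) :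
    HasSum (fun i : ℕ => ((P + i).choose (m - 1) : ℝ) * x ^ (P + 1 + i))
      ((x / (1 - x)) ^ m -
        ∑ j ∈ Finset.range (P + 1 - m), ((j + (m - 1)).choose (m - 1) : ℝ) * x ^ (m + j)) := by
  have hx : ‖x‖ < 1 := by rwa [Real.norm_eq_abs, abs_of_nonneg hx0]
  have h0 := (hasSum_choose_mul_geometric_of_norm_lt_one (m - 1) hx).mul_left (x ^ m)
  have hm : m - 1 + 1 = m := by omega
  have h1 : HasSum (fun n : ℕ => ((n + (m - 1)).choose (m - 1) : ℝ) * x ^ (m + n))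
      ((x / (1 - x)) ^ m) := by
    have he : ∀ n : ℕ, x ^ m * (((n + (m - 1)).choose (m - 1) : ℝ) * x ^ n)
        = ((n + (m - 1)).choose (m - 1) : ℝ) * x ^ (m + n) := by
      intro n; rw [pow_add]; ring
    have hv : x ^ m * (1 / (1 - x) ^ (m - 1 + 1)) = (x / (1 - x)) ^ m := by
      rw [hm, div_pow]; ring
    rw [← hv]
    simpa only [he] using h0
  have h2 := (hasSum_nat_add_iff'
    (f := fun n : ℕ => ((n + (m - 1)).choose (m - 1) : ℝ) * x ^ (m + n)) (P + 1 - m)).mpr h1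
  have he2 : ∀ i : ℕ, ((i + (P + 1 - m) + (m - 1)).choose (m - 1) : ℝ) * x ^ (m + (i + (P + 1 - m)))
      = ((P + i).choose (m - 1) : ℝ) * x ^ (P + 1 + i) := by
    intro i
    rw [show i + (P + 1 - m) + (m - 1) = P + i by omega, show m + (i + (P + 1 - m)) = P + 1 + i by omega]
  simpa only [he2] using h2

/-- The coefficients of the order-2P multiderivative wave scheme:
`A p β = 2 ∑_{m=1}^{p} (−1)^m (β^{2m}/(2m)!) · C(p−1, m−1)`. -/
noncomputable def A (p : ℕ) (β : ℝ) : ℝ :=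
  2 * ∑ m ∈ Finset.Icc 1 p,
    (-1 : ℝ) ^ m * β ^ (2 * m) / (Nat.factorial (2 * m)) * ((p - 1).choose (m - 1))

lemma poly_eq (β x : ℝ) (P : ℕ) :
    ∑ p ∈ Finset.Icc 1 P, A p β * x ^ p
      = 2 * ∑ m ∈ Finset.Icc 1 P, cc β m *
          ∑ j ∈ Finset.range (P + 1 - m), ((j + (m - 1)).choose (m - 1) : ℝ) * x ^ (m + j) := by
  have inner : ∀ m, 1 ≤ m → m ≤ P →
      ∑ p ∈ Finset.Icc 1 P, ((p - 1).choose (m - 1) : ℝ) * x ^ p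
        = ∑ j ∈ Finset.range (P + 1 - m), ((j + (m - 1)).choose (m - 1) : ℝ) * x ^ (m + j) := by
    intro m hm1 hmP
    rw [show Finset.Icc 1 P = Finset.Ico 1 (P+1) by rw [Finset.Ico_add_one_right_eq_Icc]]
    rw [← Finset.sum_Ico_consecutive _ (by omega : 1 ≤ m) (by omega : m ≤ P + 1)]
    have hzero : ∑ p ∈ Finset.Ico 1 m, ((p - 1).choose (m - 1) : ℝ) * x ^ p = 0 := by
      apply Finset.sum_eq_zero
      intro p hp
      rw [Finset.mem_Ico] at hp
      rw [Nat.choose_eq_zero_of_lt (by omega : p - 1 < m - 1)]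
      simp
    rw [hzero, zero_add, Finset.sum_Ico_eq_sum_range]
    apply Finset.sum_congr rfl
    intro j _
    rw [show m + j - 1 = j + (m - 1) by omega]
  have step1 : ∀ p ∈ Finset.Icc 1 P, A p β * x ^ p
      = ∑ m ∈ Finset.Icc 1 P, 2 * (cc β m * ((p - 1).choose (m - 1) : ℝ) * x ^ p) := by
    intro p hp
    rw [Finset.mem_Icc] at hp
    rw [A, Finset.mul_sum, Finset.sum_mul]
    rw [Finset.sum_subset (Finset.Icc_subset_Icc_right hp.2)]
    · apply Finset.sum_congr rfl
      intro m _; rw [cc]; ring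
    · intro m hm hm'
      rw [Finset.mem_Icc] at hm hm'
      rw [Nat.choose_eq_zero_of_lt (by omega : p - 1 < m - 1)]
      simp
  calc ∑ p ∈ Finset.Icc 1 P, A p β * x ^ p
      = ∑ p ∈ Finset.Icc 1 P, ∑ m ∈ Finset.Icc 1 P,
          2 * (cc β m * ((p - 1).choose (m - 1) : ℝ) * x ^ p) := Finset.sum_congr rfl step1
    _ = ∑ m ∈ Finset.Icc 1 P, ∑ p ∈ Finset.Icc 1 P,
          2 * (cc β m * ((p - 1).choose (m - 1) : ℝ) * x ^ p) := Finset.sum_comm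
    _ = ∑ m ∈ Finset.Icc 1 P,
          2 * (cc β m * ∑ p ∈ Finset.Icc 1 P, ((p - 1).choose (m - 1) : ℝ) * x ^ p) := by
        refine Finset.sum_congr rfl fun m _ => ?_
        rw [Finset.mul_sum, Finset.mul_sum]
        exact Finset.sum_congr rfl fun p _ => by ring
    _ = _ := by
        rw [Finset.mul_sum]
        refine Finset.sum_congr rfl fun m hm => ?_
        rw [Finset.mem_Icc] at hm
        rw [inner m hm.1 hm.2]

/-- The P-term truncation of the scheme's symbol approximates the exact symbol
`2(cos(β√(x/(1−x))) − 1)` to order `x^{P+1}` uniformly on `[0, r]`, `r < 1`. -/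
theorem stmt_17 (β : ℝ) (hβ : 0 < β) (P : ℕ) (hP : 1 ≤ P) (r : ℝ)
    (hr0 : 0 < r) (hr1 : r < 1) :
    ∃ K : ℝ, 0 < K ∧ ∀ x : ℝ, x ∈ Set.Icc (0 : ℝ) r →
      |2 * (Real.cos (β * Real.sqrt (x / (1 - x))) - 1) -
        ∑ p ∈ Finset.Icc 1 P, A p β * x ^ p| ≤ K * x ^ (P + 1) := by
  have h1r : 0 < 1 - r := by linarith
  set R : ℝ := r / (1 - r) with hRdef
  have hR0 : 0 ≤ R := by positivity
  set C0 : ℝ := 2 * Real.cosh (β * Real.sqrt R)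
    + 2 * ∑ m ∈ Finset.Icc 1 P, β ^ (2 * m) / (Nat.factorial (2 * m)) * R ^ m with hC0
  have hC0nn : 0 ≤ C0 := by
    have h1 : 0 < Real.cosh (β * Real.sqrt R) := Real.cosh_pos _
    have h2 : (0:ℝ) ≤ ∑ m ∈ Finset.Icc 1 P, β ^ (2 * m) / (Nat.factorial (2 * m)) * R ^ m := by
      apply Finset.sum_nonneg
      intro m _
      have : (0:ℝ) ≤ β ^ (2 * m) := by rw [pow_mul]; positivity
      positivity
    rw [hC0]; linarith
  refine ⟨C0 / r ^ (P + 1) + 1, by positivity, fun x hx => ?_⟩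
  obtain ⟨hx0, hxr⟩ := hx
  have hx1 : x < 1 := lt_of_le_of_lt hxr hr1
  have h1x : 0 < 1 - x := by linarith
  set u : ℝ := x / (1 - x) with hudef
  have hu0 : 0 ≤ u := by positivity
  have huR : u ≤ R := by
    rw [hudef, hRdef, div_le_div_iff₀ h1x h1r]; nlinarith
  have huxR : u ≤ (x / r) * R := by
    have h1 : u ≤ x / (1 - r) := by
      rw [hudef, div_le_div_iff₀ h1x h1r]; nlinarith
    have h2 : (x / r) * R = x / (1 - r) := by
      rw [hRdef]; field_simp
    rw [h2]; exact h1
  have hxrnn : 0 ≤ (x / r) ^ (P + 1) := by positivity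
  -- the exact key exponent bound
  have hfac : (x / r) ^ (P + 1) * r ^ (P + 1) = x ^ (P + 1) := by
    rw [div_pow]; field_simp
  -- Tail bound
  have htail := tail_cos β P hu0
  have hG := (tail_cosh β P hR0).mul_left ((x / r) ^ (P + 1))
  have habs : ∀ i : ℕ, |cc β (i + (P + 1)) * u ^ (i + (P + 1))|
      ≤ (x / r) ^ (P + 1) * (β ^ (2 * (i + (P + 1))) / (Nat.factorial (2 * (i + (P + 1)))) * R ^ (i + (P + 1))) := by
    intro i
    rw [abs_mul, abs_cc, abs_of_nonneg (pow_nonneg hu0 _)]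
    have hcpos : (0:ℝ) ≤ β ^ (2 * (i + (P + 1))) / (Nat.factorial (2 * (i + (P + 1)))) := by
      have : (0:ℝ) ≤ β ^ (2 * (i + (P + 1))) := by rw [pow_mul]; positivity
      positivity
    have hupow : u ^ (i + (P + 1)) ≤ (x / r) ^ (P + 1) * R ^ (i + (P + 1)) := by
      have e1 : u ^ (i + (P + 1)) = u ^ (P + 1) * u ^ i := by rw [pow_add]; ring
      have e2 : (x / r) ^ (P + 1) * R ^ (i + (P + 1)) = ((x / r) * R) ^ (P + 1) * R ^ i := by
        rw [mul_pow, pow_add]; ring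
      rw [e1, e2]
      apply mul_le_mul
      · exact pow_le_pow_left₀ hu0 huxR _
      · exact pow_le_pow_left₀ hu0 huR _
      · exact pow_nonneg hu0 _
      · positivity
    calc β ^ (2 * (i + (P + 1))) / (Nat.factorial (2 * (i + (P + 1)))) * u ^ (i + (P + 1))
        ≤ β ^ (2 * (i + (P + 1))) / (Nat.factorial (2 * (i + (P + 1)))) * ((x / r) ^ (P + 1) * R ^ (i + (P + 1))) :=
          mul_le_mul_of_nonneg_left hupow hcpos
      _ = (x / r) ^ (P + 1) * (β ^ (2 * (i + (P + 1))) / (Nat.factorial (2 * (i + (P + 1)))) * R ^ (i + (P + 1))) := by ring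
  have hT1 : Real.cos (β * Real.sqrt u) - ∑ m ∈ Finset.range (P + 1), cc β m * u ^ m
      ≤ (x / r) ^ (P + 1) * (Real.cosh (β * Real.sqrt R)
        - ∑ m ∈ Finset.range (P + 1), β ^ (2 * m) / (Nat.factorial (2 * m)) * R ^ m) :=
    hasSum_le (fun i => (abs_le.mp (habs i)).2) htail hG
  have hT2 : -((x / r) ^ (P + 1) * (Real.cosh (β * Real.sqrt R)
        - ∑ m ∈ Finset.range (P + 1), β ^ (2 * m) / (Nat.factorial (2 * m)) * R ^ m))
      ≤ Real.cos (β * Real.sqrt u) - ∑ m ∈ Finset.range (P + 1), cc β m * u ^ m :=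
    hasSum_le (fun i => neg_le_of_abs_le (habs i)) hG.neg htail
  have hScoshnn : (0:ℝ) ≤ ∑ m ∈ Finset.range (P + 1), β ^ (2 * m) / (Nat.factorial (2 * m)) * R ^ m := by
    apply Finset.sum_nonneg
    intro m _
    have : (0:ℝ) ≤ β ^ (2 * m) := by rw [pow_mul]; positivity
    positivity
  have hTailBound : |Real.cos (β * Real.sqrt u) - ∑ m ∈ Finset.range (P + 1), cc β m * u ^ m|
      ≤ (x / r) ^ (P + 1) * Real.cosh (β * Real.sqrt R) := by
    have hmono : (x / r) ^ (P + 1) * (Real.cosh (β * Real.sqrt R)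
          - ∑ m ∈ Finset.range (P + 1), β ^ (2 * m) / (Nat.factorial (2 * m)) * R ^ m)
        ≤ (x / r) ^ (P + 1) * Real.cosh (β * Real.sqrt R) := by
      apply mul_le_mul_of_nonneg_left _ hxrnn
      linarith
    rw [abs_le]
    constructor
    · calc -((x / r) ^ (P + 1) * Real.cosh (β * Real.sqrt R)) ≤ -((x / r) ^ (P + 1) * (Real.cosh (β * Real.sqrt R)
          - ∑ m ∈ Finset.range (P + 1), β ^ (2 * m) / (Nat.factorial (2 * m)) * R ^ m)) := by linarith
        _ ≤ _ := hT2
    · exact le_trans hT1 hmono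
  -- per-m bounds
  have hperm : ∀ m ∈ Finset.Icc 1 P,
      |cc β m * ((x / (1 - x)) ^ m -
        ∑ j ∈ Finset.range (P + 1 - m), ((j + (m - 1)).choose (m - 1) : ℝ) * x ^ (m + j))|
      ≤ β ^ (2 * m) / (Nat.factorial (2 * m)) * R ^ m * (x / r) ^ (P + 1) := by
    intro m hm
    rw [Finset.mem_Icc] at hm
    have hEx := tail_binom P m hm.1 hm.2 hx0 hx1
    have hEr := (tail_binom P m hm.1 hm.2 (le_of_lt hr0) hr1).mul_left ((x / r) ^ (P + 1))
    have hnn : 0 ≤ (x / (1 - x)) ^ m -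
        ∑ j ∈ Finset.range (P + 1 - m), ((j + (m - 1)).choose (m - 1) : ℝ) * x ^ (m + j) := by
      refine hasSum_le (fun i => ?_) hasSum_zero hEx
      positivity
    have hle : (x / (1 - x)) ^ m -
        ∑ j ∈ Finset.range (P + 1 - m), ((j + (m - 1)).choose (m - 1) : ℝ) * x ^ (m + j)
        ≤ (x / r) ^ (P + 1) * ((r / (1 - r)) ^ m -
          ∑ j ∈ Finset.range (P + 1 - m), ((j + (m - 1)).choose (m - 1) : ℝ) * r ^ (m + j)) := by
      refine hasSum_le (fun i => ?_) hEx hEr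
      have h1 : x ^ (P + 1 + i) ≤ (x / r) ^ (P + 1) * r ^ (P + 1 + i) := by
        have : (x / r) ^ (P + 1) * r ^ (P + 1 + i) = x ^ (P + 1) * r ^ i := by
          rw [div_pow, pow_add]; field_simp; ring
        rw [this, pow_add]
        exact mul_le_mul_of_nonneg_left (pow_le_pow_left₀ hx0 hxr i) (pow_nonneg hx0 _)
      calc ((P + i).choose (m - 1) : ℝ) * x ^ (P + 1 + i)
          ≤ ((P + i).choose (m - 1) : ℝ) * ((x / r) ^ (P + 1) * r ^ (P + 1 + i)) :=
            mul_le_mul_of_nonneg_left h1 (by positivity)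
        _ = (x / r) ^ (P + 1) * (((P + i).choose (m - 1) : ℝ) * r ^ (P + 1 + i)) := by ring
    have hTr_nn : (0:ℝ) ≤ ∑ j ∈ Finset.range (P + 1 - m), ((j + (m - 1)).choose (m - 1) : ℝ) * r ^ (m + j) := by
      apply Finset.sum_nonneg; intro j _; positivity
    have hle2 : (x / (1 - x)) ^ m -
        ∑ j ∈ Finset.range (P + 1 - m), ((j + (m - 1)).choose (m - 1) : ℝ) * x ^ (m + j)
        ≤ (x / r) ^ (P + 1) * (r / (1 - r)) ^ m := by
      refine le_trans hle ?_
      apply mul_le_mul_of_nonneg_left _ hxrnn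
      linarith
    rw [abs_mul, abs_cc, abs_of_nonneg hnn]
    have hccnn : (0:ℝ) ≤ β ^ (2 * m) / (Nat.factorial (2 * m)) := by
      have : (0:ℝ) ≤ β ^ (2 * m) := by rw [pow_mul]; positivity
      positivity
    calc β ^ (2 * m) / (Nat.factorial (2 * m)) * ((x / (1 - x)) ^ m -
          ∑ j ∈ Finset.range (P + 1 - m), ((j + (m - 1)).choose (m - 1) : ℝ) * x ^ (m + j))
        ≤ β ^ (2 * m) / (Nat.factorial (2 * m)) * ((x / r) ^ (P + 1) * (r / (1 - r)) ^ m) :=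
          mul_le_mul_of_nonneg_left hle2 hccnn
      _ = β ^ (2 * m) / (Nat.factorial (2 * m)) * R ^ m * (x / r) ^ (P + 1) := by rw [hRdef]; ring
  -- key algebraic identity
  have hS : ∑ m ∈ Finset.range (P + 1), cc β m * u ^ m
      = 1 + ∑ m ∈ Finset.Icc 1 P, cc β m * u ^ m := by
    rw [Finset.range_eq_Ico, Finset.sum_eq_sum_Ico_succ_bot (by omega : 0 < P + 1)]
    rw [Finset.Ico_add_one_right_eq_Icc]
    congr 1
    simp [cc]
  have hkey : 2 * (Real.cos (β * Real.sqrt (x / (1 - x))) - 1) -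
        ∑ p ∈ Finset.Icc 1 P, A p β * x ^ p
      = 2 * (Real.cos (β * Real.sqrt u) - ∑ m ∈ Finset.range (P + 1), cc β m * u ^ m)
        + 2 * ∑ m ∈ Finset.Icc 1 P, cc β m * ((x / (1 - x)) ^ m -
            ∑ j ∈ Finset.range (P + 1 - m), ((j + (m - 1)).choose (m - 1) : ℝ) * x ^ (m + j)) := by
    rw [poly_eq β x P, hS]
    have hsub : ∑ m ∈ Finset.Icc 1 P, cc β m * ((x / (1 - x)) ^ m -
            ∑ j ∈ Finset.range (P + 1 - m), ((j + (m - 1)).choose (m - 1) : ℝ) * x ^ (m + j))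
        = ∑ m ∈ Finset.Icc 1 P, cc β m * (x / (1 - x)) ^ m
          - ∑ m ∈ Finset.Icc 1 P, cc β m *
            ∑ j ∈ Finset.range (P + 1 - m), ((j + (m - 1)).choose (m - 1) : ℝ) * x ^ (m + j) := by
      rw [← Finset.sum_sub_distrib]
      exact Finset.sum_congr rfl fun m _ => by ring
    rw [hsub, ← hudef]
    ring
  rw [hkey]
  have hsum_abs : |2 * ∑ m ∈ Finset.Icc 1 P, cc β m * ((x / (1 - x)) ^ m -
        ∑ j ∈ Finset.range (P + 1 - m), ((j + (m - 1)).choose (m - 1) : ℝ) * x ^ (m + j))|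
      ≤ 2 * (∑ m ∈ Finset.Icc 1 P, β ^ (2 * m) / (Nat.factorial (2 * m)) * R ^ m) * (x / r) ^ (P + 1) := by
    rw [abs_mul, abs_two]
    rw [mul_assoc]
    apply mul_le_mul_of_nonneg_left _ (by norm_num : (0:ℝ) ≤ 2)
    calc |∑ m ∈ Finset.Icc 1 P, cc β m * ((x / (1 - x)) ^ m -
          ∑ j ∈ Finset.range (P + 1 - m), ((j + (m - 1)).choose (m - 1) : ℝ) * x ^ (m + j))|
        ≤ ∑ m ∈ Finset.Icc 1 P, |cc β m * ((x / (1 - x)) ^ m -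
          ∑ j ∈ Finset.range (P + 1 - m), ((j + (m - 1)).choose (m - 1) : ℝ) * x ^ (m + j))| :=
          Finset.abs_sum_le_sum_abs _ _
      _ ≤ ∑ m ∈ Finset.Icc 1 P, β ^ (2 * m) / (Nat.factorial (2 * m)) * R ^ m * (x / r) ^ (P + 1) :=
          Finset.sum_le_sum hperm
      _ = (∑ m ∈ Finset.Icc 1 P, β ^ (2 * m) / (Nat.factorial (2 * m)) * R ^ m) * (x / r) ^ (P + 1) := by
          rw [Finset.sum_mul]
  calc |2 * (Real.cos (β * Real.sqrt u) - ∑ m ∈ Finset.range (P + 1), cc β m * u ^ m)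
        + 2 * ∑ m ∈ Finset.Icc 1 P, cc β m * ((x / (1 - x)) ^ m -
            ∑ j ∈ Finset.range (P + 1 - m), ((j + (m - 1)).choose (m - 1) : ℝ) * x ^ (m + j))|
      ≤ |2 * (Real.cos (β * Real.sqrt u) - ∑ m ∈ Finset.range (P + 1), cc β m * u ^ m)|
        + |2 * ∑ m ∈ Finset.Icc 1 P, cc β m * ((x / (1 - x)) ^ m -
            ∑ j ∈ Finset.range (P + 1 - m), ((j + (m - 1)).choose (m - 1) : ℝ) * x ^ (m + j))| :=
        abs_add_le _ _
    _ ≤ 2 * ((x / r) ^ (P + 1) * Real.cosh (β * Real.sqrt R))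
        + 2 * (∑ m ∈ Finset.Icc 1 P, β ^ (2 * m) / (Nat.factorial (2 * m)) * R ^ m) * (x / r) ^ (P + 1) := by
        have := hTailBound
        have h2 : |2 * (Real.cos (β * Real.sqrt u) - ∑ m ∈ Finset.range (P + 1), cc β m * u ^ m)|
            ≤ 2 * ((x / r) ^ (P + 1) * Real.cosh (β * Real.sqrt R)) := by
          rw [abs_mul, abs_two]
          linarith
        linarith [hsum_abs]
    _ = C0 * (x / r) ^ (P + 1) := by rw [hC0]; ring
    _ = C0 / r ^ (P + 1) * x ^ (P + 1) := by
        rw [div_pow]; ring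
    _ ≤ (C0 / r ^ (P + 1) + 1) * x ^ (P + 1) := by
        apply mul_le_mul_of_nonneg_right _ (pow_nonneg hx0 _)
        linarith
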